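/- arXiv:1801.05911 — 7 statements merged into one kernel-verified Lean document; each statement's English description precedes it below -/
import Mathlib

section
/- For any number of candidates k ≥ 3 and any odd number of voters n ≥ 3, the Borda count never produces social disappointment: if a candidate is ranked last by at least n/2 (hence at least (n+1)/2) of the voters, that candidate is never a Borda winner. -/
open Finset

/-- Pair-counting: for a strict total order `r` on a fintype `A`,
the total "Borda mass" doubled equals `k * (k-1)`. -/
lemma borda_total_double (A : Type) [Fintype A] (r : A → A → Prop)
    (h : IsStrictTotalOrder A r) :
    2 * ∑ c : A, Nat.card {y : A // r c y} =
      Fintype.card A * (Fintype.card A - 1) := by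
  classical
  have hasymm : ∀ a b : A, r a b → r b a → False := by
    intro a b hab hba
    exact h.irrefl a (h.trans _ _ _ hab hba)
  have hcard : ∀ c : A, Nat.card {y : A // r c y} =
      (univ.filter (fun y => r c y)).card := by
    intro c
    rw [Nat.card_eq_fintype_card, Fintype.card_subtype]
  have hswap : (∑ c : A, (univ.filter (fun y => r c y)).card) =
      ∑ c : A, (univ.filter (fun y => r y c)).card := by
    simp only [Finset.card_filter]
    exact Finset.sum_comm
  have hkey : ∀ c : A, (univ.filter (fun y => r c y)).card +
      (univ.filter (fun y => r y c)).card = Fintype.card A - 1 := by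
    intro c
    have hdisj : Disjoint (univ.filter (fun y => r c y))
        (univ.filter (fun y => r y c)) := by
      rw [Finset.disjoint_filter]
      intro y _ h1 h2
      exact hasymm _ _ h1 h2
    rw [← Finset.card_union_of_disjoint hdisj, ← Finset.filter_or]
    have : (univ.filter (fun y => r c y ∨ r y c)) = univ.erase c := by
      ext y
      simp only [Finset.mem_filter, Finset.mem_univ, true_and, Finset.mem_erase,
        and_true]
      constructor
      · rintro (h1 | h1) rfl
        · exact h.irrefl _ h1
        · exact h.irrefl _ h1
      · intro hy
        rcases (show r c y ∨ c = y ∨ r y c by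
          by_contra hne; push_neg at hne
          exact hne.2.1 (h.trichotomous c y hne.1 hne.2.2)) with h1 | h1 | h1
        · exact Or.inl h1
        · exact absurd h1.symm hy
        · exact Or.inr h1
    rw [this, Finset.card_erase_of_mem (Finset.mem_univ c), Finset.card_univ]
  calc 2 * ∑ c : A, Nat.card {y : A // r c y}
      = (∑ c : A, (univ.filter (fun y => r c y)).card) +
        ∑ c : A, (univ.filter (fun y => r y c)).card := by
        simp only [hcard]; rw [← hswap]; ring
    _ = ∑ c : A, ((univ.filter (fun y => r c y)).card +
        (univ.filter (fun y => r y c)).card) := by rw [Finset.sum_add_distrib]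
    _ = ∑ _c : A, (Fintype.card A - 1) := by
        exact Finset.sum_congr rfl fun c _ => hkey c
    _ = Fintype.card A * (Fintype.card A - 1) := by
        rw [Finset.sum_const, Finset.card_univ, smul_eq_mul]

/-- For k ≥ 3 candidates and an odd number n ≥ 3 of voters, the Borda count never
produces social disappointment: a candidate ranked last by at least n/2 voters
is never a Borda winner. -/
theorem borda_no_social_disappointment_odd
    (A : Type) [Fintype A] (hA : 3 ≤ Fintype.card A)
    (n : ℕ) (hn : 3 ≤ n) (hodd : Odd n)
    (P : Fin n → A → A → Prop) (hP : ∀ i, IsStrictTotalOrder A (P i))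
    (x : A)
    (hx : n ≤ 2 * Nat.card {i : Fin n // ∀ y : A, y ≠ x → P i y x}) :
    ¬ (∀ z : A,
        (∑ i : Fin n, Nat.card {y : A // P i z y}) ≤
        (∑ i : Fin n, Nat.card {y : A // P i x y})) := by
  classical
  intro hwin
  set k := Fintype.card A with hk
  set B : A → ℕ := fun z => ∑ i : Fin n, Nat.card {y : A // P i z y} with hB
  -- Lower bound: 2 * k * B x ≥ n * (k * (k-1))
  have htot : 2 * ∑ z : A, B z = n * (k * (k - 1)) := by
    have : ∑ z : A, B z = ∑ i : Fin n, ∑ z : A, Nat.card {y : A // P i z y} :=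
      Finset.sum_comm
    rw [this, Finset.mul_sum]
    rw [Finset.sum_congr rfl (fun i _ => borda_total_double A (P i) (hP i))]
    simp [Finset.sum_const, Finset.card_univ]
    exact Or.inl rfl
  have hsumle : ∑ z : A, B z ≤ k * B x := by
    calc ∑ z : A, B z ≤ (univ : Finset A).card • B x :=
          Finset.sum_le_card_nsmul univ B (B x) (fun z _ => hwin z)
      _ = k * B x := by rw [Finset.card_univ, smul_eq_mul]
  have hlow : n * (k * (k - 1)) ≤ 2 * (k * B x) := by
    rw [← htot]; omega
  -- Upper bound on B x
  set S : Finset (Fin n) := univ.filter (fun i => ∀ y : A, y ≠ x → P i y x) with hSdef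
  have hScard : Nat.card {i : Fin n // ∀ y : A, y ≠ x → P i y x} = S.card := by
    rw [Nat.card_eq_fintype_card, Fintype.card_subtype]
  have hzero : ∀ i ∈ S, Nat.card {y : A // P i x y} = 0 := by
    intro i hi
    rw [hSdef, Finset.mem_filter] at hi
    have : IsEmpty {y : A // P i x y} := by
      constructor
      rintro ⟨y, hy⟩
      have hyx : y ≠ x := by
        rintro rfl; exact (hP i).irrefl _ hy
      exact (hP i).irrefl x ((hP i).trans _ _ _ hy (hi.2 y hyx))
    simp [Nat.card_eq_zero, this]
  have hbound : ∀ i : Fin n, Nat.card {y : A // P i x y} ≤ k - 1 := by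
    intro i
    rw [Nat.card_eq_fintype_card, Fintype.card_subtype]
    have hsub : (univ.filter (fun y => P i x y)) ⊆ univ.erase x := by
      intro y hy
      rw [Finset.mem_filter] at hy
      rw [Finset.mem_erase]
      refine ⟨?_, Finset.mem_univ y⟩
      rintro rfl; exact (hP i).irrefl _ hy.2
    calc (univ.filter (fun y => P i x y)).card ≤ (univ.erase x).card :=
          Finset.card_le_card hsub
      _ = k - 1 := by rw [Finset.card_erase_of_mem (Finset.mem_univ x), Finset.card_univ]
  have hBx : B x ≤ (n - S.card) * (k - 1) := by
    have hsplit : B x = ∑ i ∈ S, Nat.card {y : A // P i x y} +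
        ∑ i ∈ Sᶜ, Nat.card {y : A // P i x y} :=
      (Finset.sum_add_sum_compl S _).symm
    rw [hsplit, Finset.sum_eq_zero hzero, zero_add]
    calc ∑ i ∈ Sᶜ, Nat.card {y : A // P i x y} ≤ Sᶜ.card • (k - 1) :=
          Finset.sum_le_card_nsmul _ _ _ (fun i _ => hbound i)
      _ = (n - S.card) * (k - 1) := by
          rw [Finset.card_compl, smul_eq_mul, Fintype.card_fin]
  -- majority: 2 * S.card ≥ n + 1
  have hs_le : S.card ≤ n := by
    calc S.card ≤ (univ : Finset (Fin n)).card := Finset.card_le_card (Finset.subset_univ S)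
      _ = n := by rw [Finset.card_univ, Fintype.card_fin]
  have hmaj : n + 1 ≤ 2 * S.card := by
    rw [hScard] at hx
    rcases hodd with ⟨m, hm⟩
    omega
  have h2ns : 2 * (n - S.card) ≤ n - 1 := by omega
  -- combine
  have hup : 2 * B x ≤ (n - 1) * (k - 1) := by
    calc 2 * B x ≤ 2 * ((n - S.card) * (k - 1)) := by omega
      _ = (2 * (n - S.card)) * (k - 1) := by ring
      _ ≤ (n - 1) * (k - 1) := Nat.mul_le_mul_right _ h2ns
  have hfinal : n * (k * (k - 1)) ≤ k * ((n - 1) * (k - 1)) := by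
    calc n * (k * (k - 1)) ≤ 2 * (k * B x) := hlow
      _ = k * (2 * B x) := by ring
      _ ≤ k * ((n - 1) * (k - 1)) := Nat.mul_le_mul_left _ hup
  have hk1 : 1 ≤ k - 1 := by omega
  have hcancel : k * (n * (k - 1)) ≤ k * ((n - 1) * (k - 1)) := by
    calc k * (n * (k - 1)) = n * (k * (k - 1)) := by ring
      _ ≤ k * ((n - 1) * (k - 1)) := hfinal
  have : n * (k - 1) ≤ (n - 1) * (k - 1) :=
    Nat.le_of_mul_le_mul_left hcancel (by omega)
  have : n ≤ n - 1 := Nat.le_of_mul_le_mul_right this (by omega)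
  omega
end

section
/- For k ≥ 3 candidates and an even number n of voters, if a candidate x is ranked last by at least n/2 voters and x is a Borda winner, then every candidate is a Borda winner (all candidates have equal Borda score); moreover this forces x to be ranked first by the other n/2 voters. -/
open Finset
open scoped Classical

lemma aux_nat_card_filter {A : Type*} [Fintype A] (p : A → Prop) :
    Nat.card {y // p y} = (Finset.univ.filter p).card := by
  simp [Nat.card_eq_fintype_card, Fintype.card_subtype]

lemma aux_rank_sum (A : Type) [Fintype A] (P : A → A → Prop) (h : IsStrictTotalOrder A P) :
    (∑ z : A, (Finset.univ.filter (fun y => P z y)).card) * 2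
      = Fintype.card A * (Fintype.card A - 1) := by
  haveI := h
  rcases isEmpty_or_nonempty A with hE | hNE
  · simp
  set k := Fintype.card A with hk
  set r : A → ℕ := fun z => (Finset.univ.filter (fun y => P z y)).card with hr
  have hstep : ∀ z w, P z w → r w < r z := by
    intro z w hzw
    apply Finset.card_lt_card
    have hsub : Finset.univ.filter (fun y => P w y) ⊆ Finset.univ.filter (fun y => P z y) := by
      intro y hy
      simp only [mem_filter, mem_univ, true_and] at hy ⊢
      exact _root_.trans hzw hy
    rw [Finset.ssubset_iff_of_subset hsub]
    exact ⟨w, by simp [hzw], by simp [irrefl]⟩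
  have hinj : ∀ a ∈ Finset.univ, ∀ b ∈ Finset.univ, r a = r b → a = b := by
    intro a _ b _ hab
    by_contra hne
    rcases trichotomous_of P a b with h1 | h1 | h1
    · exact absurd hab (Nat.ne_of_gt (hstep a b h1))
    · exact hne h1
    · exact absurd hab (Nat.ne_of_lt (hstep b a h1))
  have hle : ∀ z, r z ≤ k - 1 := by
    intro z
    have hsub : Finset.univ.filter (fun y => P z y) ⊆ Finset.univ.erase z := by
      intro y hy
      simp only [mem_filter, mem_univ, true_and] at hy
      refine Finset.mem_erase.2 ⟨fun hyz => ?_, Finset.mem_univ y⟩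
      exact irrefl z (hyz ▸ hy)
    calc r z ≤ (Finset.univ.erase z).card := Finset.card_le_card hsub
    _ = k - 1 := by rw [Finset.card_erase_of_mem (Finset.mem_univ z), Finset.card_univ]
  have hk1 : 1 ≤ k := Fintype.card_pos
  have hcard_img : (Finset.univ.image r).card = k := by
    rw [Finset.card_image_of_injOn hinj, Finset.card_univ]
  have himg : Finset.univ.image r = Finset.range k := by
    apply Finset.eq_of_subset_of_card_le
    · intro j hj
      simp only [Finset.mem_image] at hj
      obtain ⟨z, _, rfl⟩ := hj
      rw [Finset.mem_range]
      have := hle z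
      omega
    · rw [Finset.card_range, hcard_img]
  have hsum : ∑ z : A, r z = ∑ j ∈ Finset.range k, j := by
    rw [← himg, Finset.sum_image hinj]
  rw [hsum, Finset.sum_range_id_mul_two]


/-- For k ≥ 3 candidates and an even number n of voters: if x is ranked last by at
least n/2 voters and x is a Borda winner, then all candidates have equal Borda
score (so all are winners), and x is ranked first by every voter not ranking x last. -/
theorem borda_social_disappointment_even_forces_tie
    (A : Type) [Fintype A] (hA : 3 ≤ Fintype.card A)
    (n : ℕ) (heven : Even n)
    (P : Fin n → A → A → Prop) (hP : ∀ i, IsStrictTotalOrder A (P i))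
    (x : A)
    (hlast : n ≤ 2 * Nat.card {i : Fin n // ∀ y : A, y ≠ x → P i y x})
    (hwin : ∀ z : A,
        (∑ i : Fin n, Nat.card {y : A // P i z y}) ≤
        (∑ i : Fin n, Nat.card {y : A // P i x y})) :
    (∀ z : A,
        (∑ i : Fin n, Nat.card {y : A // P i z y}) =
        (∑ i : Fin n, Nat.card {y : A // P i x y})) ∧
    (∀ i : Fin n, ¬ (∀ y : A, y ≠ x → P i y x) → (∀ y : A, y ≠ x → P i x y)) := by
  set k := Fintype.card A with hk
  set r : Fin n → A → ℕ := fun i z => (Finset.univ.filter (fun y => P i z y)).card with hr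
  have hcard : ∀ i z, Nat.card {y : A // P i z y} = r i z := by
    intro i z
    exact aux_nat_card_filter (fun y => P i z y)
  simp only [hcard] at hwin ⊢
  set score : A → ℕ := fun z => ∑ i : Fin n, r i z with hscore
  -- the set of "last" voters
  set L : Finset (Fin n) := Finset.univ.filter (fun i => ∀ y : A, y ≠ x → P i y x) with hL
  have hLcard : n ≤ 2 * L.card := by
    rw [aux_nat_card_filter (fun i : Fin n => ∀ y : A, y ≠ x → P i y x)] at hlast
    rw [Finset.filter_congr_decidable] at hlast
    rw [hL, Finset.filter_congr_decidable]
    exact hlast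
  set m := L.card with hm
  have hmn : m ≤ n := by
    calc m ≤ (Finset.univ : Finset (Fin n)).card := Finset.card_le_card (Finset.filter_subset _ _)
    _ = n := by simp
  -- per-voter sum identity
  have hsum_i : ∀ i : Fin n, (∑ z : A, r i z) * 2 = k * (k - 1) := fun i =>
    aux_rank_sum A (P i) (hP i)
  have htot : (∑ z : A, score z) * 2 = n * (k * (k - 1)) := by
    rw [hscore]
    rw [Finset.sum_comm, Finset.sum_mul]
    simp only [hsum_i]
    simp [mul_comm]
  -- ranks are at most k-1
  have hbound : ∀ i z, r i z ≤ k - 1 := by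
    intro i z
    have hsub : Finset.univ.filter (fun y => P i z y) ⊆ Finset.univ.erase z := by
      intro y hy
      simp only [Finset.mem_filter, Finset.mem_univ, true_and] at hy
      refine Finset.mem_erase.2 ⟨fun hyz => ?_, Finset.mem_univ y⟩
      exact (hP i).irrefl z (hyz ▸ hy)
    calc r i z ≤ (Finset.univ.erase z).card := Finset.card_le_card hsub
    _ = k - 1 := by rw [Finset.card_erase_of_mem (Finset.mem_univ z), Finset.card_univ]
  -- last voters give x rank 0
  have hlast0 : ∀ i ∈ L, r i x = 0 := by
    intro i hi
    rw [hL, Finset.mem_filter] at hi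
    rw [hr]
    simp only [Finset.card_eq_zero, Finset.filter_eq_empty_iff]
    intro y _
    intro hxy
    have hyx : y ≠ x := fun h => (hP i).irrefl x (h ▸ hxy)
    have := hi.2 y hyx
    exact (hP i).irrefl x ((hP i).trans x y x hxy this)
  have hsplit : score x = ∑ i ∈ Lᶜ, r i x := by
    show (∑ i : Fin n, r i x) = ∑ i ∈ Lᶜ, r i x
    rw [← Finset.sum_add_sum_compl L (fun i => r i x)]
    rw [Finset.sum_eq_zero hlast0, zero_add]
  have hcompl : Lᶜ.card = n - m := by
    rw [Finset.card_compl, Fintype.card_fin, hm]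
  have h1 : score x ≤ (n - m) * (k - 1) := by
    rw [hsplit]
    calc (∑ i ∈ Lᶜ, r i x) ≤ ∑ i ∈ Lᶜ, (k - 1) :=
          Finset.sum_le_sum (fun i _ => hbound i x)
    _ = (n - m) * (k - 1) := by rw [Finset.sum_const, hcompl, smul_eq_mul]
  have h3 : (∑ z : A, score z) ≤ k * score x := by
    calc (∑ z : A, score z) ≤ ∑ _z : A, score x := Finset.sum_le_sum (fun z _ => hwin z)
    _ = k * score x := by rw [Finset.sum_const, Finset.card_univ, smul_eq_mul]
  have hk1 : 1 ≤ k := by omega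
  -- key equality: 2 * score x = n * (k-1)
  have hkey : 2 * score x = n * (k - 1) := by
    have hA1 : n * (k * (k - 1)) ≤ k * (2 * score x) := by
      calc n * (k * (k - 1)) = (∑ z : A, score z) * 2 := htot.symm
      _ ≤ k * score x * 2 := by exact Nat.mul_le_mul_right 2 h3
      _ = k * (2 * score x) := by ring
    have hA2 : 2 * score x ≤ n * (k - 1) := by
      calc 2 * score x ≤ 2 * ((n - m) * (k - 1)) := by omega
      _ = (2 * (n - m)) * (k - 1) := by ring
      _ ≤ n * (k - 1) := Nat.mul_le_mul_right _ (by omega)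
    have : n * (k - 1) ≤ 2 * score x := by
      have := Nat.le_of_mul_le_mul_left (by calc k * (n * (k-1)) = n * (k * (k-1)) := by ring
        _ ≤ k * (2 * score x) := hA1) (by omega : 0 < k)
      exact this
    omega
  have hsumtot : (∑ z : A, score z) = k * score x := by
    have : (∑ z : A, score z) * 2 = (k * score x) * 2 := by
      rw [htot]
      calc n * (k * (k - 1)) = k * (n * (k - 1)) := by ring
      _ = k * (2 * score x) := by rw [hkey]
      _ = k * score x * 2 := by ring
    omega
  constructor
  · intro z
    refine le_antisymm (hwin z) ?_
    by_contra hlt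
    push_neg at hlt
    have hstrict : (∑ w : A, score w) < ∑ _w : A, score x :=
      Finset.sum_lt_sum (fun w _ => hwin w) ⟨z, Finset.mem_univ z, hlt⟩
    rw [Finset.sum_const, Finset.card_univ, smul_eq_mul, ← hk] at hstrict
    omega
  · -- each non-last voter ranks x first
    have hLsum : ∑ i ∈ Lᶜ, r i x = (n - m) * (k - 1) := by
      have h2 : 2 * ((n - m) * (k - 1)) ≤ 2 * score x := by
        calc 2 * ((n - m) * (k - 1)) = (2 * (n - m)) * (k - 1) := by ring
        _ ≤ n * (k - 1) := Nat.mul_le_mul_right _ (by omega)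
        _ = 2 * score x := hkey.symm
      rw [hsplit] at h2
      have h4 : (∑ i ∈ Lᶜ, r i x) ≤ (n - m) * (k - 1) := hsplit ▸ h1
      omega
    have heach : ∀ i ∈ Lᶜ, r i x = k - 1 := by
      intro i hi
      by_contra hne
      have hlt : r i x < k - 1 := lt_of_le_of_ne (hbound i x) hne
      have : (∑ j ∈ Lᶜ, r j x) < ∑ _j ∈ Lᶜ, (k - 1) :=
        Finset.sum_lt_sum (fun j _ => hbound j x) ⟨i, hi, hlt⟩
      rw [Finset.sum_const, hcompl, smul_eq_mul, hLsum] at this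
      omega
    intro i hi y hy
    have hiL : i ∈ Lᶜ := by
      rw [Finset.mem_compl, hL, Finset.mem_filter]
      intro h
      exact hi h.2
    have hri : r i x = k - 1 := heach i hiL
    have hsub : Finset.univ.filter (fun y => P i x y) ⊆ Finset.univ.erase x := by
      intro w hw
      simp only [Finset.mem_filter, Finset.mem_univ, true_and] at hw
      exact Finset.mem_erase.2 ⟨fun hwx => (hP i).irrefl x (hwx ▸ hw), Finset.mem_univ w⟩
    have heq : Finset.univ.filter (fun y => P i x y) = Finset.univ.erase x := by
      apply Finset.eq_of_subset_of_card_le hsub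
      rw [Finset.card_erase_of_mem (Finset.mem_univ x), Finset.card_univ, ← hk]
      rw [show (Finset.univ.filter (fun y => P i x y)).card = r i x from rfl, hri]
    have : y ∈ Finset.univ.filter (fun y => P i x y) := by
      rw [heq]
      exact Finset.mem_erase.2 ⟨hy, Finset.mem_univ y⟩
    simpa using this
end

section
/- If |A| ≥ 3, the Least Unpopular (LU) voting procedure satisfies the social disappointment criterion: an alternative ranked last by at least half of the voters is never an LU winner. -/
/-- For |A| ≥ 3, the LU procedure satisfies the social disappointment criterion:
an alternative ranked last by at least half of the voters is never an LU winner. -/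
theorem lu_social_disappointment_criterion
    (A : Type) [Fintype A] (hA : 3 ≤ Fintype.card A)
    (n : ℕ) (hn : 0 < n)
    (P : Fin n → A → A → Prop) (hP : ∀ i, IsStrictTotalOrder A (P i))
    (x : A)
    (hx : n ≤ 2 * Nat.card {i : Fin n // ∀ y : A, y ≠ x → P i y x}) :
    ¬ (∀ z : A,
        Nat.card {i : Fin n // ∀ y : A, y ≠ x → P i y x} ≤
        Nat.card {i : Fin n // ∀ y : A, y ≠ z → P i y z}) := by
  classical
  intro hmin
  set lp : A → ℕ := fun z => Nat.card {i : Fin n // ∀ y : A, y ≠ z → P i y z} with hlp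
  have hcard : ∀ z, lp z =
      (Finset.univ.filter (fun i : Fin n => ∀ y : A, y ≠ z → P i y z)).card := by
    intro z
    simp [hlp, Nat.card_eq_fintype_card, Fintype.card_subtype]
  have hdisj : ∀ z₁ ∈ (Finset.univ : Finset A), ∀ z₂ ∈ (Finset.univ : Finset A), z₁ ≠ z₂ →
      Disjoint (Finset.univ.filter (fun i : Fin n => ∀ y, y ≠ z₁ → P i y z₁))
               (Finset.univ.filter (fun i : Fin n => ∀ y, y ≠ z₂ → P i y z₂)) := by
    intro z₁ _ z₂ _ hne
    refine Finset.disjoint_left.mpr ?_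
    intro i hi1 hi2
    simp only [Finset.mem_filter] at hi1 hi2
    have h12 := hi2.2 z₁ hne
    have h21 := hi1.2 z₂ hne.symm
    haveI := hP i
    exact irrefl_of (P i) z₁ (trans_of (P i) h12 h21)
  have hsum : ∑ z : A, lp z ≤ n := by
    calc ∑ z : A, lp z
        = (Finset.univ.biUnion
            (fun z : A => Finset.univ.filter (fun i : Fin n => ∀ y, y ≠ z → P i y z))).card := by
          rw [Finset.card_biUnion hdisj]
          exact Finset.sum_congr rfl fun z _ => hcard z
      _ ≤ (Finset.univ : Finset (Fin n)).card :=
          Finset.card_le_card (Finset.subset_univ _)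
      _ = n := by simp
  have h3 : 3 * lp x ≤ ∑ z : A, lp z := by
    calc 3 * lp x ≤ Fintype.card A * lp x := Nat.mul_le_mul_right _ hA
      _ = ∑ _z : A, lp x := by simp [Finset.sum_const, Finset.card_univ, mul_comm]
      _ ≤ ∑ z : A, lp z := Finset.sum_le_sum (fun z _ => hmin z)
  have hx' : n ≤ 2 * lp x := hx
  omega
end

section
/- In the Condorcet-cycle construction with n+1 alternatives and 2n voters (n ≥ 3), the alternative x_{n+1} is the unique Condorcet winner yet is ranked last by exactly half of the voters. -/
/-- Rank (0 = first place) of alternative `a` on the ballot of voter `v` in the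
Condorcet-cycle construction with alternatives `x_0, …, x_n` (so `x_n` plays the
role of `x_{n+1}` in the paper) and `2n` voters.  For `v < n`, voter `v` ranks
`x_n` first followed by the cyclic order `x_v > x_{v+1} > …`; voter `n + v`
ranks the cyclic order `x_v > x_{v+1} > …` first and `x_n` last. -/
def cycleRank (n v a : ℕ) : ℕ :=
  if v < n then (if a = n then 0 else ((a + n - v) % n) + 1)
  else (if a = n then n else (a + n - (v - n)) % n)

/-- The profile of the Condorcet-cycle construction: `2n` voters with linear
ballots on the `n + 1` alternatives, given by the ranks `cycleRank`. -/
def cycleProfile (n : ℕ) : Fin (2 * n) → Fin (n + 1) → Fin (n + 1) → Prop :=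
  fun v a b => cycleRank n v.val a.val < cycleRank n v.val b.val

/-- Closed form for `x % n` when `x < 2 * n`. -/
lemma mod_two_n {n x : ℕ} (hn : 0 < n) (h : x < 2 * n) :
    (x % n = x ∧ x < n) ∨ (x % n = x - n ∧ n ≤ x ∧ x - n < n) := by
  rcases lt_or_ge x n with h1 | h1
  · exact Or.inl ⟨Nat.mod_eq_of_lt h1, h1⟩
  · refine Or.inr ⟨?_, h1, by omega⟩
    rw [Nat.mod_eq_sub_mod h1, Nat.mod_eq_of_lt (by omega)]

lemma cycleRank_top_lo {n v : ℕ} (hv : v < n) : cycleRank n v n = 0 := by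
  simp [cycleRank, hv]

lemma cycleRank_top_hi {n v : ℕ} (hv : ¬ v < n) : cycleRank n v n = n := by
  simp [cycleRank, hv]

lemma cycleRank_lo {n v a : ℕ} (hv : v < n) (ha : a < n) :
    cycleRank n v a = (a + n - v) % n + 1 := by
  simp [cycleRank, hv, Nat.ne_of_lt ha]

lemma cycleRank_hi {n v a : ℕ} (hv : ¬ v < n) (ha : a < n) :
    cycleRank n v a = (a + n - (v - n)) % n := by
  simp [cycleRank, hv, Nat.ne_of_lt ha]

/-- ranks are injective on each ballot -/
lemma cycleRank_inj {n : ℕ} (hn : 0 < n) (v : Fin (2 * n)) (a b : Fin (n + 1))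
    (h : cycleRank n v.val a.val = cycleRank n v.val b.val) : a = b := by
  have hv2 := v.isLt
  have ha := a.isLt
  have hb := b.isLt
  rcases lt_or_ge v.val n with hv | hv
  · rcases Nat.lt_or_ge a.val n with ha' | ha' <;> rcases Nat.lt_or_ge b.val n with hb' | hb'
    · rw [cycleRank_lo hv ha', cycleRank_lo hv hb'] at h
      rcases mod_two_n hn (x := a.val + n - v.val) (by omega) with ⟨h1, h2⟩ | ⟨h1, h2⟩ <;>
        rcases mod_two_n hn (x := b.val + n - v.val) (by omega) with ⟨h3, h4⟩ | ⟨h3, h4⟩ <;>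
        exact Fin.ext (by omega)
    · rw [cycleRank_lo hv ha', show b.val = n by omega, cycleRank_top_lo hv] at h; omega
    · rw [cycleRank_lo hv hb', show a.val = n by omega, cycleRank_top_lo hv] at h; omega
    · exact Fin.ext (by omega)
  · have hv' : ¬ v.val < n := by omega
    rcases Nat.lt_or_ge a.val n with ha' | ha' <;> rcases Nat.lt_or_ge b.val n with hb' | hb'
    · rw [cycleRank_hi hv' ha', cycleRank_hi hv' hb'] at h
      rcases mod_two_n hn (x := a.val + n - (v.val - n)) (by omega) with ⟨h1, h2⟩ | ⟨h1, h2⟩ <;>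
        rcases mod_two_n hn (x := b.val + n - (v.val - n)) (by omega) with ⟨h3, h4⟩ | ⟨h3, h4⟩ <;>
        exact Fin.ext (by omega)
    · rw [cycleRank_hi hv' ha', show b.val = n by omega, cycleRank_top_hi hv'] at h
      have := Nat.mod_lt (a.val + n - (v.val - n)) hn; omega
    · rw [cycleRank_hi hv' hb', show a.val = n by omega, cycleRank_top_hi hv'] at h
      have := Nat.mod_lt (b.val + n - (v.val - n)) hn; omega
    · exact Fin.ext (by omega)
lemma card_le_of_imp {m : ℕ} {p q : Fin m → Prop} (h : ∀ i, p i → q i) :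
    Nat.card {i // p i} ≤ Nat.card {i // q i} :=
  Nat.card_le_card_of_injective
    (fun x : {i // p i} => (⟨x.1, h x.1 x.2⟩ : {i // q i}))
    (fun x y hxy => Subtype.ext (by simpa using congrArg Subtype.val hxy))

lemma card_lt_n (n : ℕ) : Nat.card {i : Fin (2 * n) // i.val < n} = n :=
  Nat.card_eq_of_equiv_fin
    { toFun := fun x => ⟨x.1.val, x.2⟩
      invFun := fun j => ⟨⟨j.val, by omega⟩, j.2⟩
      left_inv := fun x => rfl
      right_inv := fun j => rfl }

lemma card_ge_n (n : ℕ) : Nat.card {i : Fin (2 * n) // n ≤ i.val} = n :=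
  Nat.card_eq_of_equiv_fin
    { toFun := fun x => ⟨x.1.val - n, by have := x.1.isLt; have := x.2; omega⟩
      invFun := fun j => ⟨⟨n + j.val, by have := j.isLt; omega⟩, by simp⟩
      left_inv := fun x => Subtype.ext (Fin.ext (by have := x.2; simp; omega))
      right_inv := fun j => Fin.ext (by simp) }

lemma card_add_compl {m : ℕ} (p q : Fin m → Prop) (h : ∀ i, p i ↔ ¬ q i) :
    Nat.card {i // p i} + Nat.card {i // q i} = m := by
  classical
  rw [Nat.card_eq_fintype_card, Nat.card_eq_fintype_card, Fintype.card_subtype,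
    Fintype.card_subtype]
  rw [show Finset.univ.filter p = Finset.univ.filter (fun i => ¬ q i) from
    Finset.filter_congr (fun i _ => by simp [h i])]
  rw [Nat.add_comm, Finset.card_filter_add_card_filter_not]
  simp
lemma ne_last_val {n : ℕ} (y : Fin (n + 1)) (hy : y ≠ Fin.last n) : y.val < n := by
  have h1 := y.isLt
  have h2 : y.val ≠ n := fun he => hy (Fin.ext (by simpa using he))
  omega

/-- In the Condorcet-cycle construction with `n + 1` alternatives and `2n` voters
(`n ≥ 3`), the alternative `x_{n+1}` (here `Fin.last n`) is the unique Condorcet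
winner, yet it is ranked last by exactly half of the voters. -/
theorem cycle_construction_unique_condorcet_winner_ranked_last_by_half
    (n : ℕ) (hn : 3 ≤ n) :
    -- every ballot is a linear order
    (∀ v, IsStrictTotalOrder (Fin (n + 1)) (cycleProfile n v)) ∧
    -- x_{n+1} is a Condorcet winner
    (∀ y : Fin (n + 1), y ≠ Fin.last n →
      Nat.card {i : Fin (2 * n) // cycleProfile n i y (Fin.last n)} ≤
      Nat.card {i : Fin (2 * n) // cycleProfile n i (Fin.last n) y}) ∧
    -- and it is the unique Condorcet winner
    (∀ z : Fin (n + 1),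
      (∀ y : Fin (n + 1),
        Nat.card {i : Fin (2 * n) // cycleProfile n i y z} ≤
        Nat.card {i : Fin (2 * n) // cycleProfile n i z y}) →
      z = Fin.last n) ∧
    -- x_{n+1} is ranked last by exactly n of the 2n voters
    Nat.card {i : Fin (2 * n) //
      ∀ y : Fin (n + 1), y ≠ Fin.last n → cycleProfile n i y (Fin.last n)} = n := by
  have hn0 : 0 < n := by omega
  refine ⟨fun v => ?_, fun y hy => ?_, fun z hz => ?_, ?_⟩
  · exact
      { trichotomous := fun a b h1 h2 => by
          rcases Nat.lt_trichotomy (cycleRank n v.val a.val) (cycleRank n v.val b.val)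
            with h | h | h
          · exact absurd h h1
          · exact cycleRank_inj hn0 v a b h
          · exact absurd h h2
        irrefl := fun a => Nat.lt_irrefl _
        trans := fun a b c => Nat.lt_trans }
  · have hy' : y.val < n := ne_last_val y hy
    calc Nat.card {i : Fin (2 * n) // cycleProfile n i y (Fin.last n)}
        ≤ Nat.card {i : Fin (2 * n) // n ≤ i.val} := by
          refine card_le_of_imp fun i hi => ?_
          by_contra hc
          have h2 : cycleRank n i.val y.val < cycleRank n i.val n := hi
          rw [cycleRank_top_lo (by omega), cycleRank_lo (by omega) hy'] at h2
          omega
      _ = n := card_ge_n n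
      _ = Nat.card {i : Fin (2 * n) // i.val < n} := (card_lt_n n).symm
      _ ≤ Nat.card {i : Fin (2 * n) // cycleProfile n i (Fin.last n) y} := by
          refine card_le_of_imp fun i hi => ?_
          show cycleRank n i.val n < cycleRank n i.val y.val
          rw [cycleRank_top_lo hi, cycleRank_lo hi hy']
          omega
  · by_contra hne
    have hzn : z.val < n := ne_last_val z hne
    set y0 := (z.val + n - 1) % n with hy0def
    have hy0 : y0 < n := Nat.mod_lt _ hn0
    set y : Fin (n + 1) := ⟨y0, by omega⟩ with hydef
    have hy0facts := mod_two_n hn0 (x := z.val + n - 1) (by omega)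
    have hyz : y ≠ z := by
      intro h
      have : y0 = z.val := congrArg Fin.val h
      rcases hy0facts with ⟨g1, g2⟩ | ⟨g1, g2, g3⟩ <;> omega
    have hA : ∀ i : Fin (2 * n), i.val % n ≠ z.val → cycleProfile n i y z := by
      intro i hi
      have hiv := i.isLt
      show cycleRank n i.val y0 < cycleRank n i.val z.val
      rcases Nat.lt_or_ge i.val n with h | h
      · have hieq : i.val % n = i.val := Nat.mod_eq_of_lt h
        rw [cycleRank_lo h hy0, cycleRank_lo h hzn]
        rcases mod_two_n hn0 (x := y0 + n - i.val) (by omega) with ⟨e1, e2⟩ | ⟨e1, e2, e3⟩ <;>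
          rcases mod_two_n hn0 (x := z.val + n - i.val) (by omega) with ⟨f1, f2⟩ | ⟨f1, f2, f3⟩ <;>
          rcases hy0facts with ⟨g1, g2⟩ | ⟨g1, g2, g3⟩ <;> omega
      · have h' : ¬ i.val < n := by omega
        have hieq : i.val % n = i.val - n := by
          rcases mod_two_n hn0 (x := i.val) (by omega) with ⟨e1, e2⟩ | ⟨e1, e2, e3⟩ <;> omega
        rw [cycleRank_hi h' hy0, cycleRank_hi h' hzn]
        rcases mod_two_n hn0 (x := y0 + n - (i.val - n)) (by omega) with ⟨e1, e2⟩ | ⟨e1, e2, e3⟩ <;>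
          rcases mod_two_n hn0 (x := z.val + n - (i.val - n)) (by omega)
            with ⟨f1, f2⟩ | ⟨f1, f2, f3⟩ <;>
          rcases hy0facts with ⟨g1, g2⟩ | ⟨g1, g2, g3⟩ <;> omega
    have hB : ∀ i : Fin (2 * n), cycleProfile n i z y → i.val % n = z.val := by
      intro i hi
      by_contra hc
      have h1 : cycleRank n i.val y.val < cycleRank n i.val z.val := hA i hc
      have h2 : cycleRank n i.val z.val < cycleRank n i.val y.val := hi
      omega
    have h2 : Nat.card {i : Fin (2 * n) // cycleProfile n i z y} ≤ Nat.card (Fin 2) := by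
      refine Nat.card_le_card_of_injective
        (fun x => if x.1.val < n then (0 : Fin 2) else 1) ?_
      intro x1 x2 h
      have b1 := hB x1.1 x1.2
      have b2 := hB x2.1 x2.2
      have l1 := x1.1.isLt
      have l2 := x2.1.isLt
      have m1 := mod_two_n hn0 (x := x1.1.val) (by omega)
      have m2 := mod_two_n hn0 (x := x2.1.val) (by omega)
      simp only at h
      split_ifs at h with c1 c2
      · exact Subtype.ext (Fin.ext (by rcases m1 with ⟨e1, e2⟩ | ⟨e1, e2, e3⟩ <;>
          rcases m2 with ⟨f1, f2⟩ | ⟨f1, f2, f3⟩ <;> omega))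
      · exact absurd h (by decide)
      · exact absurd h (by decide)
      · exact Subtype.ext (Fin.ext (by rcases m1 with ⟨e1, e2⟩ | ⟨e1, e2, e3⟩ <;>
          rcases m2 with ⟨f1, f2⟩ | ⟨f1, f2, f3⟩ <;> omega))
    have hcard2 : Nat.card (Fin 2) = 2 := by simp
    have hsum : Nat.card {i : Fin (2 * n) // cycleProfile n i y z} +
        Nat.card {i : Fin (2 * n) // cycleProfile n i z y} = 2 * n := by
      refine card_add_compl _ _ fun i => ?_
      constructor
      · intro h h'
        have hh : cycleRank n i.val y.val < cycleRank n i.val z.val := h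
        have hh' : cycleRank n i.val z.val < cycleRank n i.val y.val := h'
        omega
      · intro h'
        rcases Nat.lt_trichotomy (cycleRank n i.val y.val) (cycleRank n i.val z.val)
          with h | h | h
        · exact h
        · exact absurd (cycleRank_inj hn0 i y z h) hyz
        · exact absurd h h'
    have := hz y
    omega
  · have hiff : ∀ i : Fin (2 * n),
        (∀ y : Fin (n + 1), y ≠ Fin.last n → cycleProfile n i y (Fin.last n)) ↔ n ≤ i.val := by
      intro i
      have hiv := i.isLt
      constructor
      · intro h
        by_contra hc
        have h0 : cycleRank n i.val 0 < cycleRank n i.val n :=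
          h ⟨0, by omega⟩ (fun he => by
            have : (0 : ℕ) = n := congrArg Fin.val he
            omega)
        rw [cycleRank_top_lo (by omega), cycleRank_lo (by omega) (by omega)] at h0
        omega
      · intro h y hy
        have hy' : y.val < n := ne_last_val y hy
        show cycleRank n i.val y.val < cycleRank n i.val n
        rw [cycleRank_top_hi (by omega), cycleRank_hi (by omega) hy']
        exact Nat.mod_lt _ hn0
    rw [Nat.card_congr (Equiv.subtypeEquivRight hiff)]
    exact card_ge_n n
end

section
/- For exactly three alternatives, the unique-Condorcet-Coombs (UCC) hybrid rule satisfies both the Condorcet winner criterion and the social disappointment criterion. -/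
lemma card_add_le'' {n : ℕ} (p q : Fin n → Prop) (h : ∀ i, p i → q i → False) :
    Nat.card {i : Fin n // p i} + Nat.card {i : Fin n // q i} ≤ n := by
  classical
  simp only [Nat.card_eq_fintype_card, Fintype.card_subtype]
  rw [← Finset.card_union_of_disjoint]
  · calc _ ≤ (Finset.univ : Finset (Fin n)).card := Finset.card_le_univ _
      _ = n := Finset.card_fin n
  · rw [Finset.disjoint_left]
    intro i hi hj
    simp only [Finset.mem_filter] at hi hj
    exact h i hi.2 hj.2

lemma card_add_le₃'' {n : ℕ} (p q r : Fin n → Prop)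
    (hpq : ∀ i, p i → q i → False) (hpr : ∀ i, p i → r i → False)
    (hqr : ∀ i, q i → r i → False) :
    Nat.card {i : Fin n // p i} + Nat.card {i : Fin n // q i}
      + Nat.card {i : Fin n // r i} ≤ n := by
  have h2 : Nat.card {i : Fin n // p i ∨ q i} + Nat.card {i : Fin n // r i} ≤ n :=
    card_add_le'' _ _ (fun i hi hr => hi.elim (fun hp => hpr i hp hr) (fun hq => hqr i hq hr))
  have h3 : Nat.card {i : Fin n // p i} + Nat.card {i : Fin n // q i}
      ≤ Nat.card {i : Fin n // p i ∨ q i} := by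
    classical
    simp only [Nat.card_eq_fintype_card, Fintype.card_subtype]
    rw [← Finset.card_union_of_disjoint]
    · apply Finset.card_le_card
      intro i hi
      simp only [Finset.mem_union, Finset.mem_filter] at hi ⊢
      tauto
    · rw [Finset.disjoint_left]
      intro i hi hj
      simp only [Finset.mem_filter] at hi hj
      exact hpq i hi.2 hj.2
  omega

lemma card_mono'' {n : ℕ} (p q : Fin n → Prop) (h : ∀ i, p i → q i) :
    Nat.card {i : Fin n // p i} ≤ Nat.card {i : Fin n // q i} := by
  classical
  simp only [Nat.card_eq_fintype_card]
  exact Fintype.card_subtype_mono p q h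


open Classical in
/-- Number of voters who rank `x` last among the surviving set `S`. -/
noncomputable def lastPlaceVotes {A : Type} [Fintype A] {n : ℕ}
    (P : Fin n → A → A → Prop) (S : Finset A) (x : A) : ℕ :=
  Nat.card {i : Fin n // ∀ y ∈ S, y ≠ x → P i y x}

open Classical in
/-- One round of the Coombs procedure: delete the alternatives with the most
last-place votes among the survivors, unless all survivors are tied. -/
noncomputable def coombsStep {A : Type} [Fintype A] {n : ℕ}
    (P : Fin n → A → A → Prop) (S : Finset A) : Finset A :=
  if ∀ x ∈ S, ∀ y ∈ S, lastPlaceVotes P S x = lastPlaceVotes P S y then S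
  else S.filter (fun x => ∃ y ∈ S, lastPlaceVotes P S x < lastPlaceVotes P S y)

/-- The Coombs winners: repeatedly delete the alternatives with the most
last-place votes until the surviving set stabilizes. -/
noncomputable def coombsWinners {A : Type} [Fintype A] {n : ℕ}
    (P : Fin n → A → A → Prop) : Finset A :=
  (coombsStep P)^[Fintype.card A] Finset.univ

open Classical in
/-- The unique-Condorcet Coombs (UCC) hybrid rule: elect the alternative beating
all others in strict pairwise majority contests when it exists, otherwise elect
the Coombs winners. -/
noncomputable def uccWinners {A : Type} [Fintype A] {n : ℕ}
    (P : Fin n → A → A → Prop) : Finset A :=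
  if h : ∃ x : A, ∀ y : A, y ≠ x →
      Nat.card {i : Fin n // P i y x} < Nat.card {i : Fin n // P i x y} then
    {h.choose}
  else coombsWinners P

/-- For exactly three alternatives, the UCC rule satisfies both the Condorcet
winner criterion and the social disappointment criterion. -/
theorem ucc_satisfies_cwc_and_sdc
    (A : Type) [Fintype A] (hA : Fintype.card A = 3)
    (n : ℕ) (hn : 0 < n)
    (P : Fin n → A → A → Prop) (hP : ∀ i, IsStrictTotalOrder A (P i)) :
    -- Condorcet winner criterion: a (unique) Condorcet winner is always elected
    (∀ x : A,
      (∀ y : A, y ≠ x →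
        Nat.card {i : Fin n // P i y x} < Nat.card {i : Fin n // P i x y}) →
      uccWinners P = {x}) ∧
    -- social disappointment criterion
    (∀ x : A,
      n ≤ 2 * Nat.card {i : Fin n // ∀ y : A, y ≠ x → P i y x} →
      x ∉ uccWinners P) := by
  classical
  have asym : ∀ i (a b : A), P i a b → P i b a → False := by
    intro i a b h1 h2
    haveI := hP i
    exact irrefl_of (P i) a (trans_of (P i) h1 h2)
  obtain ⟨a, b, c, hab, hac, hbc, huniv⟩ :=
    Finset.card_eq_three.mp (by rw [Finset.card_univ, hA] : (Finset.univ : Finset A).card = 3)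
  have hall : ∀ x : A, x = a ∨ x = b ∨ x = c := by
    intro x
    have hm := Finset.mem_univ x
    rw [huniv] at hm
    simpa using hm
  have Ldisj : ∀ x y : A, x ≠ y → ∀ i : Fin n,
      (∀ z : A, z ≠ x → P i z x) → (∀ z : A, z ≠ y → P i z y) → False := by
    intro x y hxy i hx hy
    exact asym i y x (hx y (Ne.symm hxy)) (hy x hxy)
  have cwc : ∀ x : A,
      (∀ y : A, y ≠ x →
        Nat.card {i : Fin n // P i y x} < Nat.card {i : Fin n // P i x y}) →
      uccWinners P = {x} := by
    intro x hx
    have hex : ∃ z : A, ∀ y : A, y ≠ z →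
        Nat.card {i : Fin n // P i y z} < Nat.card {i : Fin n // P i z y} := ⟨x, hx⟩
    rw [uccWinners, dif_pos hex]
    have hcx : hex.choose = x := by
      by_contra hne
      have h1 := hex.choose_spec x (fun h => hne h.symm)
      have h2 := hx hex.choose hne
      omega
    rw [hcx]
  refine ⟨cwc, ?_⟩
  intro x hx
  have hany : ∃ y : A, y ≠ x := by
    rcases hall x with h | h | h
    · exact ⟨b, by rw [h]; exact hab.symm⟩
    · exact ⟨a, by rw [h]; exact hab⟩
    · exact ⟨a, by rw [h]; exact hac⟩
  by_cases hex : ∃ z : A, ∀ y : A, y ≠ z →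
      Nat.card {i : Fin n // P i y z} < Nat.card {i : Fin n // P i z y}
  · rw [uccWinners, dif_pos hex]
    simp only [Finset.mem_singleton]
    intro hxc
    have hcw := hex.choose_spec
    rw [← hxc] at hcw
    obtain ⟨y, hyx⟩ := hany
    have h1 : Nat.card {i : Fin n // ∀ z : A, z ≠ x → P i z x}
        ≤ Nat.card {i : Fin n // P i y x} :=
      card_mono'' _ _ (fun i hi => hi y hyx)
    have h2 : Nat.card {i : Fin n // P i x y}
        + Nat.card {i : Fin n // ∀ z : A, z ≠ x → P i z x} ≤ n :=
      card_add_le'' _ _ (fun i hpi hli => asym i x y hpi (hli y hyx))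
    have h3 := hcw y hyx
    omega
  · rw [uccWinners, dif_neg hex]
    have hstep_sub : ∀ S : Finset A, coombsStep P S ⊆ S := by
      intro S
      rw [coombsStep]
      split
      · exact Finset.Subset.refl S
      · exact Finset.filter_subset _ _
    have hveq : ∀ z : A, lastPlaceVotes P Finset.univ z
        = Nat.card {i : Fin n // ∀ y : A, y ≠ z → P i y z} := by
      intro z
      rw [lastPlaceVotes]
      exact Nat.card_congr (Equiv.subtypeEquivRight (by
        intro i
        constructor
        · intro h y hy
          exact h y (Finset.mem_univ y) hy
        · intro h y _ hy
          exact h y hy))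
    have hle : ∀ y : A, lastPlaceVotes P Finset.univ y ≤ lastPlaceVotes P Finset.univ x := by
      intro y
      by_cases hyx : y = x
      · rw [hyx]
      · have hdj := card_add_le'' _ _ (Ldisj y x hyx)
        rw [hveq y, hveq x]
        omega
    have hnot : ¬ ∀ p ∈ (Finset.univ : Finset A), ∀ q ∈ (Finset.univ : Finset A),
        lastPlaceVotes P Finset.univ p = lastPlaceVotes P Finset.univ q := by
      intro hall'
      have h3 := card_add_le₃'' _ _ _ (Ldisj a b hab) (Ldisj a c hac) (Ldisj b c hbc)
      have ha' := hall' a (Finset.mem_univ a) x (Finset.mem_univ x)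
      have hb' := hall' b (Finset.mem_univ b) x (Finset.mem_univ x)
      have hc' := hall' c (Finset.mem_univ c) x (Finset.mem_univ x)
      rw [hveq a, hveq x] at ha'
      rw [hveq b, hveq x] at hb'
      rw [hveq c, hveq x] at hc'
      omega
    have hx1 : x ∉ coombsStep P Finset.univ := by
      rw [coombsStep, if_neg hnot]
      simp only [Finset.mem_filter, Finset.mem_univ, true_and]
      push_neg
      exact hle
    rw [coombsWinners, hA]
    intro hmem
    rw [show (3 : ℕ) = 2 + 1 from rfl, Function.iterate_succ_apply,
      show (2 : ℕ) = 1 + 1 from rfl, Function.iterate_succ_apply,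
      Function.iterate_one] at hmem
    exact hx1 (hstep_sub _ (hstep_sub _ hmem))
end

section
/- The Least Unpopular Reselection (LUR) procedure satisfies the Pareto criterion: if every voter ranks a above b, then b is not an LUR winner. -/
open Classical in
/-- One round of the Least Unpopular Reselection (LUR) procedure: keep only the
surviving alternatives with the fewest last-place votes among the survivors. -/
noncomputable def lurStep {A : Type} [Fintype A] {n : ℕ}
    (P : Fin n → A → A → Prop) (S : Finset A) : Finset A :=
  S.filter (fun x => ∀ y ∈ S, lastPlaceVotes P S x ≤ lastPlaceVotes P S y)

/-- The LUR winners: repeatedly keep the alternatives with the fewest last-place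
votes among the survivors until the surviving set stabilizes. -/
noncomputable def lurWinners {A : Type} [Fintype A] {n : ℕ}
    (P : Fin n → A → A → Prop) : Finset A :=
  (lurStep P)^[Fintype.card A] Finset.univ

/-- In a nonempty finite set, a strict total order has a bottom element. -/
lemma exists_bottom {A : Type} (r : A → A → Prop) (hr : IsStrictTotalOrder A r)
    (S : Finset A) (hS : S.Nonempty) : ∃ z ∈ S, ∀ y ∈ S, y ≠ z → r y z := by
  classical
  induction S using Finset.induction_on with
  | empty => exact absurd hS (by simp)
  | @insert c S hc ih =>
    rcases S.eq_empty_or_nonempty with rfl | hSne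
    · exact ⟨c, by simp, by simp⟩
    · obtain ⟨z, hzS, hz⟩ := ih hSne
      rcases (if h1 : r c z then Or.inl h1 else if h2 : r z c then Or.inr (Or.inr h2) else Or.inr (Or.inl (hr.trichotomous c z h1 h2)) : r c z ∨ c = z ∨ r z c) with h | h | h
      · refine ⟨z, Finset.mem_insert_of_mem hzS, ?_⟩
        intro y hy hyz
        rcases Finset.mem_insert.mp hy with rfl | hyS
        · exact h
        · exact hz y hyS hyz
      · exact absurd (h ▸ hzS) hc
      · refine ⟨c, Finset.mem_insert_self c S, ?_⟩
        intro y hy hyc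
        rcases Finset.mem_insert.mp hy with rfl | hyS
        · exact absurd rfl hyc
        · by_cases hyz : y = z
          · exact hyz ▸ h
          · exact hr.trans y z c (hz y hyS hyz) h

lemma lastPlaceVotes_a_eq_zero {A : Type} [Fintype A] {n : ℕ}
    (P : Fin n → A → A → Prop) (hP : ∀ i, IsStrictTotalOrder A (P i))
    {a b : A} (hab : a ≠ b) (hpar : ∀ i : Fin n, P i a b)
    {S : Finset A} (hb : b ∈ S) : lastPlaceVotes P S a = 0 := by
  rw [lastPlaceVotes, Nat.card_eq_zero]
  left
  refine ⟨fun x => ?_⟩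
  obtain ⟨i, hi⟩ := x
  have hba : P i b a := hi b hb (Ne.symm hab)
  exact (hP i).irrefl a ((hP i).trans a b a (hpar i) hba)

lemma lastPlaceVotes_pos {A : Type} [Fintype A] {n : ℕ}
    (P : Fin n → A → A → Prop) {S : Finset A} {z : A} {i : Fin n}
    (hz : ∀ y ∈ S, y ≠ z → P i y z) : 0 < lastPlaceVotes P S z := by
  rw [lastPlaceVotes]
  haveI : Nonempty {i : Fin n // ∀ y ∈ S, y ≠ z → P i y z} := ⟨⟨i, hz⟩⟩
  exact Nat.card_pos

/-- The LUR procedure satisfies the Pareto criterion: if every voter ranks a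
above b, then b is not an LUR winner. -/
theorem lur_satisfies_pareto
    (A : Type) [Fintype A]
    (n : ℕ) (hn : 0 < n)
    (P : Fin n → A → A → Prop) (hP : ∀ i, IsStrictTotalOrder A (P i))
    (a b : A) (hab : a ≠ b) (hpar : ∀ i : Fin n, P i a b) :
    b ∉ lurWinners P := by
  classical
  have key : ∀ k : ℕ, b ∈ (lurStep P)^[k] Finset.univ →
      a ∈ (lurStep P)^[k] Finset.univ ∧
      ((lurStep P)^[k] Finset.univ).card ≤ Fintype.card A - k := by
    intro k
    induction k with
    | zero => intro _; simp
    | succ k ih =>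
      intro hb
      rw [Function.iterate_succ_apply'] at hb ⊢
      set S := (lurStep P)^[k] Finset.univ with hSdef
      rw [lurStep, Finset.mem_filter] at hb
      obtain ⟨hbS, hbmin⟩ := hb
      obtain ⟨haS, hcard⟩ := ih hbS
      have ha0 : lastPlaceVotes P S a = 0 :=
        lastPlaceVotes_a_eq_zero P hP hab hpar hbS
      have hb0 : lastPlaceVotes P S b = 0 :=
        Nat.le_zero.mp (ha0 ▸ hbmin a haS)
      -- a survives
      have ha' : a ∈ lurStep P S := by
        rw [lurStep, Finset.mem_filter]
        exact ⟨haS, fun y _ => ha0 ▸ Nat.zero_le _⟩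
      -- some element with positive last-place votes is eliminated
      have i0 : Fin n := ⟨0, hn⟩
      obtain ⟨z, hzS, hz⟩ := exists_bottom (P i0) (hP i0) S ⟨b, hbS⟩
      have hzpos : 0 < lastPlaceVotes P S z := lastPlaceVotes_pos P hz
      have hz' : z ∉ lurStep P S := by
        rw [lurStep, Finset.mem_filter]
        rintro ⟨_, hzmin⟩
        have := hzmin b hbS
        omega
      have hsub : lurStep P S ⊂ S :=
        ⟨Finset.filter_subset _ _, fun h => hz' (h hzS)⟩
      have : (lurStep P S).card < S.card := Finset.card_lt_card hsub
      exact ⟨ha', by omega⟩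
  intro hb
  have := key (Fintype.card A) hb
  rw [lurWinners] at hb
  have hpos : 0 < ((lurStep P)^[Fintype.card A] (Finset.univ : Finset A)).card :=
    Finset.card_pos.mpr ⟨b, hb⟩
  omega
end

section
/- The Least Unpopular Reselection (LUR) procedure satisfies the always-a-winner criterion and the social disappointment criterion (for |A| ≥ 3). -/
open Classical in
lemma lpv_eq {A : Type} [Fintype A] {n : ℕ} (P : Fin n → A → A → Prop) (S : Finset A) (x : A) :
    lastPlaceVotes P S x = (Finset.univ.filter (fun i => ∀ y ∈ S, y ≠ x → P i y x)).card := by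
  classical
  have e : {i : Fin n // ∀ y ∈ S, y ≠ x → P i y x} ≃
      {i : Fin n // i ∈ Finset.univ.filter (fun i => ∀ y ∈ S, y ≠ x → P i y x)} :=
    Equiv.subtypeEquivRight (by simp)
  rw [lastPlaceVotes, Nat.card_congr e]
  exact Nat.card_eq_finsetCard _

lemma iterate_subset {A : Type} [Fintype A] {n : ℕ} (P : Fin n → A → A → Prop) (S : Finset A) (k : ℕ) :
    (lurStep P)^[k] S ⊆ S := by
  induction k generalizing S with
  | zero => simp
  | succ k ih =>
    rw [Function.iterate_succ_apply]
    refine (ih _).trans ?_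
    intro a ha
    rw [lurStep] at ha
    simp only [Finset.mem_filter] at ha
    exact ha.1

lemma lurStep_nonempty {A : Type} [Fintype A] {n : ℕ} (P : Fin n → A → A → Prop) {S : Finset A}
    (hS : S.Nonempty) : (lurStep P S).Nonempty := by
  obtain ⟨x, hx, hmin⟩ := S.exists_min_image (lastPlaceVotes P S) hS
  refine ⟨x, ?_⟩
  rw [lurStep]
  simp only [Finset.mem_filter]
  exact ⟨hx, hmin⟩

/-- The LUR procedure satisfies the always-a-winner criterion and, for |A| ≥ 3,
the social disappointment criterion. -/
theorem lur_satisfies_aaw_and_sdc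
    (A : Type) [Fintype A] (hA : 3 ≤ Fintype.card A)
    (n : ℕ) (hn : 0 < n)
    (P : Fin n → A → A → Prop) (hP : ∀ i, IsStrictTotalOrder A (P i)) :
    -- always a winner
    (lurWinners P).Nonempty ∧
    -- social disappointment criterion
    (∀ x : A,
      n ≤ 2 * Nat.card {i : Fin n // ∀ y : A, y ≠ x → P i y x} →
      x ∉ lurWinners P) := by
  classical
  have hApos : 0 < Fintype.card A := by omega
  haveI : Nonempty A := Fintype.card_pos_iff.mp hApos
  have huniv : (Finset.univ : Finset A).Nonempty := Finset.univ_nonempty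
  have hiter : ∀ k, ((lurStep P)^[k] (Finset.univ : Finset A)).Nonempty := by
    intro k
    induction k with
    | zero => simp only [Function.iterate_zero_apply]; exact huniv
    | succ k ih =>
      rw [Function.iterate_succ_apply']
      exact lurStep_nonempty P ih
  refine ⟨hiter _, ?_⟩
  intro x hx hmem
  -- winners are contained in the first-round survivors
  have hsub : lurWinners P ⊆ lurStep P Finset.univ := by
    have hc : Fintype.card A = (Fintype.card A - 1) + 1 := by omega
    rw [lurWinners, hc, Function.iterate_succ_apply]
    exact iterate_subset P _ _
  have hx1 : x ∈ lurStep P Finset.univ := hsub hmem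
  rw [lurStep] at hx1
  simp only [Finset.mem_filter, Finset.mem_univ, true_and, true_implies] at hx1
  have hmin : ∀ y : A, lastPlaceVotes P Finset.univ x ≤ lastPlaceVotes P Finset.univ y := by
    intro y; exact hx1 y
  -- the hypothesis card equals lastPlaceVotes on univ
  set F : A → Finset (Fin n) :=
    fun t => Finset.univ.filter (fun i => ∀ y ∈ (Finset.univ : Finset A), y ≠ t → P i y t) with hF
  have hLF : ∀ t, lastPlaceVotes P Finset.univ t = (F t).card := fun t => lpv_eq P _ t
  have hcard : Nat.card {i : Fin n // ∀ y : A, y ≠ x → P i y x}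
      = lastPlaceVotes P Finset.univ x := by
    rw [lastPlaceVotes]
    exact Nat.card_congr (Equiv.subtypeEquivRight (by simp))
  -- pick two other alternatives
  have h2 : 1 < (Finset.univ.erase x).card := by
    rw [Finset.card_erase_of_mem (Finset.mem_univ x), Finset.card_univ]
    omega
  obtain ⟨a, ha, b, hb, hab⟩ := Finset.one_lt_card.mp h2
  have hax : a ≠ x := Finset.ne_of_mem_erase ha
  have hbx : b ≠ x := Finset.ne_of_mem_erase hb
  -- fibers are pairwise disjoint
  have hdisj : ∀ t t' : A, t ≠ t' → Disjoint (F t) (F t') := by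
    intro t t' htt
    rw [Finset.disjoint_left]
    intro i hi hi'
    simp only [hF, Finset.mem_filter, Finset.mem_univ, true_and, true_implies] at hi hi'
    have h1 : P i t' t := hi t' htt.symm
    have h2 : P i t t' := hi' t htt
    haveI := hP i
    exact absurd (Trans.trans h2 h1) (irrefl_of (P i) t)
  have hd1 : Disjoint (F x) (F a) := hdisj _ _ (Ne.symm hax)
  have hd2 : Disjoint (F x) (F b) := hdisj _ _ (Ne.symm hbx)
  have hd3 : Disjoint (F a) (F b) := hdisj _ _ hab
  have hsum : (F x).card + (F a).card + (F b).card ≤ n := by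
    have hu : ((F x ∪ F a) ∪ F b).card = (F x).card + (F a).card + (F b).card := by
      rw [Finset.card_union_of_disjoint (by
        rw [Finset.disjoint_union_left]; exact ⟨hd2, hd3⟩),
        Finset.card_union_of_disjoint hd1]
    calc (F x).card + (F a).card + (F b).card = ((F x ∪ F a) ∪ F b).card := hu.symm
      _ ≤ Fintype.card (Fin n) := Finset.card_le_univ _
      _ = n := Fintype.card_fin n
  have h1 := hmin a
  have h2' := hmin b
  rw [hLF, hLF] at h1 h2'
  rw [hcard, hLF] at hx
  omega
end
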